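/- Let a < b be real numbers and let u : ℝ → ℝ be continuous on [a,b] with finite pointwise variation V := Var(u; [a,b]) < ∞. Let Γ := { (t, u(t)) : t ∈ [a,b] } ⊆ ℝ². Then max(b − a, V) ≤ H¹(Γ) ≤ (b − a) + V, where H¹ denotes the one-dimensional Hausdorff measure on ℝ². (This is the 0-dimensional instance of the inequalities Var(S) ≤ M(S) and M(S) ≤ ∫ M(S(t)) dt + Var(S) between variation and mass of a space-time integral current.) -/

import Mathlib

open MeasureTheory Filter Set

section Aux

lemma graphAux_dist (s t us ut : ℝ) :
    dist ((EuclideanSpace.equiv (Fin 2) ℝ).symm ![s, us])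
      ((EuclideanSpace.equiv (Fin 2) ℝ).symm ![t, ut])
      = Real.sqrt ((s - t) ^ 2 + (us - ut) ^ 2) := by
  rw [EuclideanSpace.dist_eq]
  simp [Fin.sum_univ_two, Real.dist_eq, sq_abs]

lemma graphAux_dist_le (s t us ut : ℝ) :
    dist ((EuclideanSpace.equiv (Fin 2) ℝ).symm ![s, us])
      ((EuclideanSpace.equiv (Fin 2) ℝ).symm ![t, ut]) ≤ |s - t| + |us - ut| := by
  rw [graphAux_dist]
  have h1 : (s - t) ^ 2 + (us - ut) ^ 2 ≤ (|s - t| + |us - ut|) ^ 2 := by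
    nlinarith [sq_abs (s - t), sq_abs (us - ut), mul_nonneg (abs_nonneg (s - t)) (abs_nonneg (us - ut))]
  calc Real.sqrt ((s - t) ^ 2 + (us - ut) ^ 2) ≤ Real.sqrt ((|s - t| + |us - ut|) ^ 2) :=
        Real.sqrt_le_sqrt h1
    _ = |s - t| + |us - ut| := Real.sqrt_sq (by positivity)

lemma graphAux_proj_lipschitz (i : Fin 2) :
    LipschitzWith 1 (fun x : EuclideanSpace ℝ (Fin 2) => x i) := by
  apply LipschitzWith.of_dist_le_mul
  intro x y
  rw [NNReal.coe_one, one_mul, EuclideanSpace.dist_eq]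
  rw [show dist (x i) (y i) = Real.sqrt (dist (x i) (y i) ^ 2) from
    (Real.sqrt_sq dist_nonneg).symm]
  apply Real.sqrt_le_sqrt
  exact Finset.single_le_sum (f := fun j => dist (x j) (y j) ^ 2)
    (fun j _ => sq_nonneg _) (Finset.mem_univ i)

/-- In a real inner product space, any preconnected set containing `x` and `y` has
one-dimensional Hausdorff measure at least `edist x y`. -/
lemma graphAux_edist_le_hausdorff {E : Type*} [NormedAddCommGroup E] [InnerProductSpace ℝ E]
    [MeasurableSpace E] [BorelSpace E] {S : Set E} (hS : IsPreconnected S)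
    {x y : E} (hx : x ∈ S) (hy : y ∈ S) : edist x y ≤ μH[1] S := by
  rcases eq_or_ne x y with rfl | hne
  · simp
  · set d : ℝ := ‖y - x‖ with hd
    have hd0 : 0 < d := by
      rw [hd, norm_pos_iff, sub_ne_zero]
      exact hne.symm
    set e : E := d⁻¹ • (y - x) with he_def
    have he : ‖e‖ = 1 := by
      rw [he_def, norm_smul, norm_inv, Real.norm_eq_abs, abs_of_pos hd0, ← hd,
        inv_mul_cancel₀ hd0.ne']
    set f : E → ℝ := fun z => inner ℝ z e with hf_def
    have hlip : LipschitzWith 1 f := by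
      apply LipschitzWith.of_dist_le_mul
      intro z w
      rw [NNReal.coe_one, one_mul, Real.dist_eq]
      calc |f z - f w| = |(inner ℝ (z - w) e : ℝ)| := by rw [hf_def]; rw [inner_sub_left]
        _ ≤ ‖z - w‖ * ‖e‖ := abs_real_inner_le_norm _ _
        _ = dist z w := by rw [he, mul_one, dist_eq_norm]
    have hfy : f y - f x = d := by
      have : f y - f x = (inner ℝ (y - x) e : ℝ) := by rw [hf_def]; rw [inner_sub_left]
      rw [this, he_def, real_inner_smul_right, real_inner_self_eq_norm_sq, ← hd]
      field_simp
    have hfle : f x ≤ f y := by linarith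
    have hsub : Icc (f x) (f y) ⊆ f '' S :=
      (hS.image f hlip.continuous.continuousOn).Icc_subset ⟨x, hx, rfl⟩ ⟨y, hy, rfl⟩
    calc edist x y = ENNReal.ofReal d := by
          rw [edist_dist, dist_eq_norm, ← norm_sub_rev y x]
      _ = volume (Icc (f x) (f y)) := by rw [Real.volume_Icc, hfy]
      _ = μH[1] (Icc (f x) (f y)) := by rw [MeasureTheory.hausdorffMeasure_real]
      _ ≤ μH[1] (f '' S) := measure_mono hsub
      _ ≤ (1 : NNReal) ^ (1 : ℝ) * μH[1] S := hlip.hausdorffMeasure_image_le zero_le_one S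
      _ = μH[1] S := by simp

end Aux

/-- For `u : ℝ → ℝ` continuous on `[a,b]` (`a < b`) with finite pointwise variation
`V = Var(u;[a,b])`, and `Γ = {(t, u(t)) : t ∈ [a,b]} ⊆ ℝ²` the graph of `u`:
`max(b − a, V) ≤ H¹(Γ) ≤ (b − a) + V`. -/
theorem graph_length_bounds {a b : ℝ} (hab : a < b) (u : ℝ → ℝ)
    (hu : ContinuousOn u (Set.Icc a b))
    (hV : eVariationOn u (Set.Icc a b) ≠ ⊤) :
    max (ENNReal.ofReal (b - a)) (eVariationOn u (Set.Icc a b))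
        ≤ μH[1] ((fun t : ℝ => (EuclideanSpace.equiv (Fin 2) ℝ).symm ![t, u t]) '' Set.Icc a b)
      ∧ μH[1] ((fun t : ℝ => (EuclideanSpace.equiv (Fin 2) ℝ).symm ![t, u t]) '' Set.Icc a b)
        ≤ ENNReal.ofReal (b - a) + eVariationOn u (Set.Icc a b) := by
  set F : ℝ → EuclideanSpace ℝ (Fin 2) :=
    fun t : ℝ => (EuclideanSpace.equiv (Fin 2) ℝ).symm ![t, u t] with hF_def
  set I : Set ℝ := Set.Icc a b with hI_def
  haveI : NullSingletonClass (μH[1] : Measure (EuclideanSpace ℝ (Fin 2))) :=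
    Measure.noAtoms_hausdorff (EuclideanSpace ℝ (Fin 2)) one_pos
  have haI : a ∈ I := left_mem_Icc.2 hab.le
  have hbI : b ∈ I := right_mem_Icc.2 hab.le
  have hF0 : ∀ t : ℝ, F t 0 = t := fun t => rfl
  have hF1 : ∀ t : ℝ, F t 1 = u t := fun t => rfl
  have hinj : Function.Injective F := by
    intro s t h
    have := congrArg (fun x : EuclideanSpace ℝ (Fin 2) => x 0) h
    simpa [hF0] using this
  have hFcont : ContinuousOn F I := by
    apply (EuclideanSpace.equiv (Fin 2) ℝ).symm.continuous.comp_continuousOn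
    apply continuousOn_pi.2
    intro i
    fin_cases i
    · simpa using continuousOn_id' (s := I)
    · simpa using hu
  -- pointwise distance bound: edist (F s) (F t) ≤ edist s t + edist (u s) (u t)
  have hFd : ∀ s t : ℝ, edist (F s) (F t) ≤ edist s t + edist (u s) (u t) := by
    intro s t
    rw [edist_dist, edist_dist, edist_dist, ← ENNReal.ofReal_add dist_nonneg dist_nonneg]
    apply ENNReal.ofReal_le_ofReal
    have := graphAux_dist_le s t (u s) (u t)
    simpa [Real.dist_eq, hF_def] using this
  -- combination bound: eVariationOn F ≤ (b - a) + eVariationOn u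
  have hcomb : eVariationOn F I ≤ ENNReal.ofReal (b - a) + eVariationOn u I := by
    have hid : eVariationOn (id : ℝ → ℝ) I ≤ ENNReal.ofReal (b - a) := by
      have := (monotoneOn_id (s := I)).eVariationOn_le haI hbI
      simpa [hI_def, inter_self] using this
    have hmain : eVariationOn F I ≤ eVariationOn (id : ℝ → ℝ) I + eVariationOn u I := by
      unfold eVariationOn
      refine iSup_le ?_
      rintro ⟨n, t, htm, hts⟩
      calc (∑ i ∈ Finset.range n, edist (F (t (i + 1))) (F (t i)))
          ≤ ∑ i ∈ Finset.range n, (edist (t (i + 1)) (t i) + edist (u (t (i + 1))) (u (t i))) :=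
            Finset.sum_le_sum fun i _ => hFd _ _
        _ = (∑ i ∈ Finset.range n, edist (t (i + 1)) (t i))
            + ∑ i ∈ Finset.range n, edist (u (t (i + 1))) (u (t i)) := Finset.sum_add_distrib
        _ ≤ _ := add_le_add (by exact eVariationOn.sum_le (f := (id : ℝ → ℝ)) (n := n) htm hts)
            (eVariationOn.sum_le (f := u) (n := n) htm hts)
    exact hmain.trans (add_le_add_left hid _)
  have hFfin : eVariationOn F I ≠ ⊤ :=
    ne_top_of_le_ne_top (ENNReal.add_ne_top.2 ⟨ENNReal.ofReal_ne_top, hV⟩) hcomb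
  constructor
  · -- lower bound
    apply max_le
    · -- b - a ≤ μH[1] Γ via projection on first coordinate
      have himg : (fun x : EuclideanSpace ℝ (Fin 2) => x 0) '' (F '' I) = I := by
        rw [image_image]
        simp only [hF0, image_id']
      calc ENNReal.ofReal (b - a) = μH[1] I := by
            rw [MeasureTheory.hausdorffMeasure_real, hI_def, Real.volume_Icc]
        _ = μH[1] ((fun x : EuclideanSpace ℝ (Fin 2) => x 0) '' (F '' I)) := by rw [himg]
        _ ≤ (1 : NNReal) ^ (1 : ℝ) * μH[1] (F '' I) :=
            (graphAux_proj_lipschitz 0).hausdorffMeasure_image_le zero_le_one _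
        _ = μH[1] (F '' I) := by simp
    · -- eVariationOn u ≤ μH[1] Γ
      have step1 : eVariationOn u I ≤ eVariationOn F I := by
        have h := ((graphAux_proj_lipschitz 1).lipschitzOnWith
            (s := (univ : Set (EuclideanSpace ℝ (Fin 2))))).comp_eVariationOn_le
            (mapsTo_univ F I)
        have hcomp : ((fun x : EuclideanSpace ℝ (Fin 2) => x 1) ∘ F) = u := by
          funext t; exact hF1 t
        rw [hcomp] at h
        simpa using h
      refine step1.trans ?_
      -- eVariationOn F I ≤ μH[1] (F '' I) via connected pieces
      unfold eVariationOn
      refine iSup_le ?_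
      rintro ⟨n, t, htm, hts⟩
      set A : ℕ → Set (EuclideanSpace ℝ (Fin 2)) := fun i => F '' Icc (t i) (t (i + 1)) with hA_def
      have hAsub : ∀ i, A i ⊆ F '' I := fun i =>
        image_mono (f := F) (Icc_subset_Icc (hts i).1 (hts (i + 1)).2)
      have hAcompact : ∀ i, IsCompact (A i) := fun i =>
        isCompact_Icc.image_of_continuousOn
          (hFcont.mono (Icc_subset_Icc (hts i).1 (hts (i + 1)).2))
      have hAkey : ∀ {i j : ℕ}, i < j → A i ∩ A j ⊆ {F (t j)} := by
        intro i j hij z hz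
        obtain ⟨⟨s1, hs1, rfl⟩, ⟨s2, hs2, hz2⟩⟩ := hz
        have hs12 : s2 = s1 := hinj hz2
        subst hs12
        have h1 : t (i + 1) ≤ t j := htm (by omega)
        have : s2 = t j := le_antisymm (hs1.2.trans h1) hs2.1
        simp [this]
      have hdisj : (↑(Finset.range n) : Set ℕ).Pairwise
          (Function.onFun (AEDisjoint (μH[1] : Measure (EuclideanSpace ℝ (Fin 2)))) A) := by
        intro i _ j _ hij
        rcases hij.lt_or_gt with h | h
        · exact measure_mono_null (hAkey h) (measure_singleton _)
        · have : A i ∩ A j ⊆ {F (t i)} := by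
            rw [inter_comm]; exact hAkey h
          exact measure_mono_null this (measure_singleton _)
      calc (∑ i ∈ Finset.range n, edist (F (t (i + 1))) (F (t i)))
          ≤ ∑ i ∈ Finset.range n, μH[1] (A i) := by
            refine Finset.sum_le_sum fun i _ => ?_
            rw [edist_comm]
            refine graphAux_edist_le_hausdorff
              (isPreconnected_Icc.image F
                (hFcont.mono (Icc_subset_Icc (hts i).1 (hts (i + 1)).2)))
              ⟨t i, left_mem_Icc.2 (htm (Nat.le_succ i)), rfl⟩
              ⟨t (i + 1), right_mem_Icc.2 (htm (Nat.le_succ i)), rfl⟩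
        _ = μH[1] (⋃ i ∈ Finset.range n, A i) :=
            (measure_biUnion_finset₀ hdisj
              (fun i _ => (hAcompact i).measurableSet.nullMeasurableSet)).symm
        _ ≤ μH[1] (F '' I) := measure_mono (iUnion₂_subset fun i _ => hAsub i)
  · -- upper bound via arclength reparametrization
    have hFlbv : LocallyBoundedVariationOn F I :=
      BoundedVariationOn.locallyBoundedVariationOn hFfin
    set ψ : ℝ → ℝ := variationOnFromTo F I a with hψ_def
    have hψmono : MonotoneOn ψ I := variationOnFromTo.monotoneOn hFlbv haI
    have key : ∀ s ∈ I, ∀ t ∈ I, s ≤ t → dist (F s) (F t) ≤ ψ t - ψ s := by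
      intro s hs t ht hst
      have h1 : ψ s + variationOnFromTo F I s t = ψ t := variationOnFromTo.add hFlbv haI hs ht
      have h2 : variationOnFromTo F I s t = (eVariationOn F (I ∩ Icc s t)).toReal :=
        variationOnFromTo.eq_of_le F I hst
      have h3 : edist (F s) (F t) ≤ eVariationOn F (I ∩ Icc s t) :=
        eVariationOn.edist_le F ⟨hs, le_refl s, hst⟩ ⟨ht, hst, le_refl t⟩
      have h4 : eVariationOn F (I ∩ Icc s t) ≠ ⊤ :=
        ne_top_of_le_ne_top hFfin (eVariationOn.mono F inter_subset_left)
      have h5 := ENNReal.toReal_mono h4 h3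
      rw [← dist_edist] at h5
      linarith
    have key' : ∀ s ∈ I, ∀ t ∈ I, dist (F s) (F t) ≤ dist (ψ s) (ψ t) := by
      intro s hs t ht
      rcases le_total s t with h | h
      · have h1 := key s hs t ht h
        have hm := hψmono hs ht h
        rw [Real.dist_eq, abs_of_nonpos (by linarith)]
        linarith
      · have h1 := key t ht s hs h
        have hm := hψmono ht hs h
        rw [dist_comm (F s), Real.dist_eq, abs_of_nonneg (by linarith)]
        linarith
    set T : Set ℝ := ψ '' I with hT_def
    set ρ : ℝ → ℝ := Function.invFunOn ψ I with hρ_def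
    set g : ℝ → EuclideanSpace ℝ (Fin 2) := F ∘ ρ with hg_def
    have hgψ : ∀ t ∈ I, g (ψ t) = F t := by
      intro t ht
      have h1 : ρ (ψ t) ∈ I := Function.invFunOn_mem ⟨t, ht, rfl⟩
      have h2 : ψ (ρ (ψ t)) = ψ t := Function.invFunOn_eq ⟨t, ht, rfl⟩
      have h3 := key' _ h1 t ht
      rw [h2, dist_self] at h3
      exact dist_le_zero.1 h3
    have himg : g '' T = F '' I := by
      apply Subset.antisymm
      · rintro _ ⟨x, ⟨t, ht, rfl⟩, rfl⟩
        rw [hgψ t ht]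
        exact ⟨t, ht, rfl⟩
      · rintro _ ⟨t, ht, rfl⟩
        exact ⟨ψ t, ⟨t, ht, rfl⟩, hgψ t ht⟩
    have hglip : LipschitzOnWith 1 g T := by
      rw [lipschitzOnWith_iff_dist_le_mul]
      rintro x ⟨s, hs, rfl⟩ y ⟨t, ht, rfl⟩
      rw [NNReal.coe_one, one_mul, hgψ s hs, hgψ t ht]
      exact key' s hs t ht
    have hTsub : T ⊆ Icc (ψ a) (ψ b) := by
      rintro _ ⟨t, ht, rfl⟩
      exact ⟨hψmono haI ht ht.1, hψmono ht hbI ht.2⟩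
    have hψa : ψ a = 0 := variationOnFromTo.self F I a
    have hψb : ψ b = (eVariationOn F I).toReal := by
      rw [hψ_def, variationOnFromTo.eq_of_le F I hab.le]
      congr 1
      rw [hI_def, inter_self]
    calc μH[1] (F '' I) = μH[1] (g '' T) := by rw [himg]
      _ ≤ (1 : NNReal) ^ (1 : ℝ) * μH[1] T := hglip.hausdorffMeasure_image_le zero_le_one
      _ = μH[1] T := by simp
      _ ≤ μH[1] (Icc (ψ a) (ψ b)) := measure_mono hTsub
      _ = ENNReal.ofReal (ψ b - ψ a) := by
          rw [MeasureTheory.hausdorffMeasure_real, Real.volume_Icc]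
      _ = eVariationOn F I := by rw [hψa, hψb, sub_zero, ENNReal.ofReal_toReal hFfin]
      _ ≤ ENNReal.ofReal (b - a) + eVariationOn u I := hcomb
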